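/- arXiv:2008.02489 — 6 statements merged into one kernel-verified Lean document; each statement's English description precedes it below -/
import Mathlib

section
/- Let Λ be a closed operator on a Banach space, let K be Λ-bounded with Λ-bound β* ≥ 0, and let S be a bounded operator mapping Dom(Λ) into itself such that ΛSx − SΛx = Kx for all x ∈ Dom(Λ). Then the restriction of S to Dom(Λ) is bounded with respect to the graph norm ‖x‖_Λ = ‖x‖ + ‖Λx‖, and its spectral radius with respect to the graph norm satisfies r_Λ(S) ≤ ‖S‖ + β*. -/
open Filter

lemma ofReal_norm_eq_coe_nnnorm {E : Type*} [SeminormedAddCommGroup E] (a : E) :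
    ENNReal.ofReal ‖a‖ = (‖a‖₊ : ENNReal) :=
  ENNReal.ofReal_eq_coe_nnreal _

/-- Auxiliary: a linear growth factor times a geometric sequence with ratio `< 1`
eventually drops below 1. -/
lemma aux_exists_pow_le {t s c : ℝ} (ht : 0 < t) (hts : t < s) (hc : 0 ≤ c) :
    ∃ n : ℕ, (1 + c * ((n : ℝ) + 1)) * t ^ (n + 1) ≤ s ^ (n + 1) := by
  have hs : 0 < s := ht.trans hts
  have hr0 : 0 ≤ t / s := div_nonneg ht.le hs.le
  have hr1 : t / s < 1 := (div_lt_one hs).mpr hts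
  have h1 : Tendsto (fun n : ℕ => (t / s) ^ n) atTop (nhds 0) :=
    tendsto_pow_atTop_nhds_zero_of_lt_one hr0 hr1
  have h2 : Tendsto (fun n : ℕ => (n : ℝ) * (t / s) ^ n) atTop (nhds 0) := by
    have hsum : Summable fun n : ℕ => ‖((n : ℝ)) ^ 1 * (t / s) ^ n‖ :=
      summable_norm_pow_mul_geometric_of_norm_lt_one 1
        (by rwa [Real.norm_eq_abs, abs_of_nonneg hr0])
    have := hsum.of_norm.tendsto_atTop_zero
    simpa using this
  have h3 : Tendsto (fun n : ℕ => (1 + c * (n : ℝ)) * (t / s) ^ n) atTop (nhds 0) := by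
    have := h1.add (h2.const_mul c)
    rw [show (0:ℝ) + c * 0 = 0 by ring] at this
    exact this.congr fun n => by ring
  have h4 : ∀ᶠ n : ℕ in atTop, (1 + c * (n : ℝ)) * (t / s) ^ n < 1 :=
    h3.eventually_lt_const one_pos
  obtain ⟨N, hN⟩ := eventually_atTop.mp h4
  refine ⟨N, ?_⟩
  have hN1 := hN (N + 1) (by omega)
  have hpow : (0:ℝ) < s ^ (N + 1) := pow_pos hs _
  have hmul : (1 + c * ((N:ℝ) + 1)) * (t / s) ^ (N + 1) * s ^ (N + 1) ≤ 1 * s ^ (N + 1) := by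
    apply mul_le_mul_of_nonneg_right _ hpow.le
    have : ((N + 1 : ℕ) : ℝ) = (N : ℝ) + 1 := by push_cast; ring
    calc (1 + c * ((N:ℝ) + 1)) * (t / s) ^ (N + 1)
        = (1 + c * ((N + 1 : ℕ) : ℝ)) * (t / s) ^ (N + 1) := by rw [this]
      _ ≤ 1 := (hN1).le
  calc (1 + c * ((N:ℝ) + 1)) * t ^ (N + 1)
      = (1 + c * ((N:ℝ) + 1)) * (t / s) ^ (N + 1) * s ^ (N + 1) := by
        rw [div_pow]; field_simp
    _ ≤ 1 * s ^ (N + 1) := hmul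
    _ = s ^ (N + 1) := one_mul _

/-- Lemma on the spectral radius with respect to the graph norm.
Let `Λ` be a closed operator on a Banach space `X`.  We model the domain of `Λ`, equipped with
the graph norm `‖x‖_Λ = ‖x‖ + ‖Λx‖`, as a Banach space `D` together with an injective continuous
inclusion `J : D → X` and the operator `Λ : D → X`, subject to `‖d‖_D = ‖J d‖ + ‖Λ d‖`
(closedness of `Λ` corresponds to completeness of `D`).

Let `K : D → X` be `Λ`-bounded with `Λ`-bound `β* ≥ 0` (for every `β > β*` there is `α ≥ 0`
with `‖Kd‖ ≤ α‖Jd‖ + β‖Λd‖`), and let `S : X → X` be bounded, mapping `Dom(Λ)` into itself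
(i.e. there is a linear map `S' : D → D` with `J ∘ S' = S ∘ J`), with the commutator relation
`Λ S' d − S Λ d = K d` on `D`.  Then the restriction `S'` of `S` to `Dom(Λ)` is bounded with
respect to the graph norm, and its spectral radius satisfies `r_Λ(S) ≤ ‖S‖ + β*`. -/
theorem stmt0
    {X D : Type*} [NormedAddCommGroup X] [NormedSpace ℂ X] [CompleteSpace X]
    [NormedAddCommGroup D] [NormedSpace ℂ D] [CompleteSpace D]
    (J : D →L[ℂ] X) (hJ : Function.Injective J)
    (Lam : D →L[ℂ] X)
    (hgraph : ∀ d : D, ‖d‖ = ‖J d‖ + ‖Lam d‖)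
    (S : X →L[ℂ] X) (S' : Module.End ℂ D)
    (hS' : ∀ d : D, J (S' d) = S (J d))
    (K : D →ₗ[ℂ] X)
    (βstar : ℝ) (hβstar : 0 ≤ βstar)
    (hK : ∀ β : ℝ, βstar < β → ∃ α : ℝ, 0 ≤ α ∧ ∀ d : D, ‖K d‖ ≤ α * ‖J d‖ + β * ‖Lam d‖)
    (hcomm : ∀ d : D, Lam (S' d) - S (Lam d) = K d) :
    ∃ S'' : D →L[ℂ] D, (∀ d : D, S'' d = S' d) ∧
      spectralRadius ℂ S'' ≤ (‖S‖₊ : ENNReal) + ENNReal.ofReal βstar := by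
  set M : ℝ := ‖S‖ with hM
  have hM0 : 0 ≤ M := norm_nonneg S
  have hJle : ∀ d : D, ‖J d‖ ≤ ‖d‖ := fun d => by
    rw [hgraph d]; linarith [norm_nonneg (Lam d)]
  have hLamle : ∀ d : D, ‖Lam d‖ ≤ ‖d‖ := fun d => by
    rw [hgraph d]; linarith [norm_nonneg (J d)]
  have hcomm' : ∀ d : D, Lam (S' d) = K d + S (Lam d) := fun d =>
    sub_eq_iff_eq_add.mp (hcomm d)
  -- a general graph-norm bound on `S'` for any admissible pair `(α, β)`
  have hbd : ∀ α β : ℝ, 0 ≤ α → 0 ≤ β → (∀ d : D, ‖K d‖ ≤ α * ‖J d‖ + β * ‖Lam d‖) →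
      ∀ d : D, ‖S' d‖ ≤ (M + α + β) * ‖d‖ := by
    intro α β hα hβ hbdK d
    have h1 : ‖Lam (S' d)‖ ≤ M * ‖Lam d‖ + (α * ‖J d‖ + β * ‖Lam d‖) :=
      calc ‖Lam (S' d)‖ = ‖K d + S (Lam d)‖ := by rw [hcomm' d]
        _ ≤ ‖K d‖ + ‖S (Lam d)‖ := norm_add_le _ _
        _ ≤ (α * ‖J d‖ + β * ‖Lam d‖) + M * ‖Lam d‖ :=
            add_le_add (hbdK d) (S.le_opNorm _)
        _ = M * ‖Lam d‖ + (α * ‖J d‖ + β * ‖Lam d‖) := by ring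
    have h2 : ‖J (S' d)‖ ≤ M * ‖J d‖ := by
      rw [hS' d]; exact S.le_opNorm _
    have e1 : M * ‖Lam d‖ + M * ‖J d‖ = M * ‖d‖ := by rw [hgraph d]; ring
    have e2 : α * ‖J d‖ ≤ α * ‖d‖ := mul_le_mul_of_nonneg_left (hJle d) hα
    have e3 : β * ‖Lam d‖ ≤ β * ‖d‖ := mul_le_mul_of_nonneg_left (hLamle d) hβ
    have := hgraph (S' d)
    nlinarith [norm_nonneg (J d), norm_nonneg (Lam d)]
  obtain ⟨α₀, hα₀, hα₀bd⟩ := hK (βstar + 1) (by linarith)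
  have hbound := hbd α₀ (βstar + 1) hα₀ (by linarith) hα₀bd
  refine ⟨S'.mkContinuous (M + α₀ + (βstar + 1)) hbound, fun d => rfl, ?_⟩
  set S'' : D →L[ℂ] D := S'.mkContinuous (M + α₀ + (βstar + 1)) hbound with hS''def
  have hcoe : ∀ d : D, S'' d = S' d := fun d => rfl
  -- rewrite the target as an `ofReal`
  have htarget : (‖S‖₊ : ENNReal) + ENNReal.ofReal βstar = ENNReal.ofReal (M + βstar) := by
    rw [ENNReal.ofReal_add hM0 hβstar, ofReal_norm_eq_coe_nnnorm]
  rw [htarget]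
  refine ENNReal.le_of_forall_pos_le_add fun ε hε _ => ?_
  have hεr : (0:ℝ) < (ε : ℝ) := hε
  have hgoal_eq : ENNReal.ofReal (M + βstar) + (ε : ENNReal)
      = ENNReal.ofReal (M + (βstar + (ε : ℝ))) := by
    rw [← ENNReal.ofReal_coe_nnreal, ← ENNReal.ofReal_add (add_nonneg hM0 hβstar) ε.coe_nonneg]
    congr 1
    ring
  rw [hgoal_eq]
  obtain ⟨α, hα, hαbd⟩ := hK (βstar + (ε:ℝ)/2) (by linarith)
  set t : ℝ := M + (βstar + (ε:ℝ)/2) with htdef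
  set s : ℝ := M + (βstar + (ε:ℝ)) with hsdef
  have ht : 0 < t := by rw [htdef]; linarith
  have hts : t < s := by rw [htdef, hsdef]; linarith
  have hs : 0 < s := ht.trans hts
  -- pushing `J` through powers
  have hSn : ∀ n : ℕ, ‖S ^ n‖ ≤ M ^ n := by
    intro n
    induction n with
    | zero => rw [pow_zero, pow_zero]; exact ContinuousLinearMap.norm_id_le
    | succ n ih =>
      calc ‖S ^ (n + 1)‖ = ‖S ^ n * S‖ := by rw [pow_succ]
        _ ≤ ‖S ^ n‖ * ‖S‖ := norm_mul_le _ _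
        _ ≤ M ^ n * M := mul_le_mul_of_nonneg_right ih hM0
        _ = M ^ (n + 1) := by rw [pow_succ]
  have hJpow : ∀ n : ℕ, ∀ d : D, J ((S'' ^ n) d) = (S ^ n) (J d) := by
    intro n
    induction n with
    | zero => intro d; simp
    | succ n ih =>
      intro d
      calc J ((S'' ^ (n + 1)) d) = J ((S'' ^ n) (S'' d)) := by rw [pow_succ]; rfl
        _ = (S ^ n) (J (S'' d)) := ih _
        _ = (S ^ n) (S (J d)) := by rw [show J (S'' d) = S (J d) from hS' d]
        _ = (S ^ (n + 1)) (J d) := by rw [pow_succ]; rfl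
  have hJe : ∀ n : ℕ, ∀ d : D, ‖J ((S'' ^ n) d)‖ ≤ t ^ n * ‖J d‖ := by
    intro n d
    rw [hJpow n d]
    calc ‖(S ^ n) (J d)‖ ≤ ‖S ^ n‖ * ‖J d‖ := (S ^ n).le_opNorm _
      _ ≤ M ^ n * ‖J d‖ := mul_le_mul_of_nonneg_right (hSn n) (norm_nonneg _)
      _ ≤ t ^ n * ‖J d‖ := by
          apply mul_le_mul_of_nonneg_right _ (norm_nonneg _)
          exact pow_le_pow_left₀ hM0 (by rw [htdef]; linarith) n
  -- key inductive estimate on `Lam` of powers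
  have hLampow : ∀ n : ℕ, ∀ d : D,
      ‖Lam ((S'' ^ n) d)‖ ≤ t ^ n * ‖Lam d‖ + (α / t) * (n : ℝ) * t ^ n * ‖J d‖ := by
    intro n
    induction n with
    | zero => intro d; simp
    | succ n ih =>
      intro d
      have hstep : (S'' ^ (n + 1)) d = S'' ((S'' ^ n) d) := by rw [pow_succ']; rfl
      set e : D := (S'' ^ n) d with he
      have h5 : ‖Lam (S'' e)‖ ≤ t * ‖Lam e‖ + α * ‖J e‖ :=
        calc ‖Lam (S'' e)‖ = ‖K e + S (Lam e)‖ := by rw [hcoe e, hcomm' e]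
          _ ≤ ‖K e‖ + ‖S (Lam e)‖ := norm_add_le _ _
          _ ≤ (α * ‖J e‖ + (βstar + (ε:ℝ)/2) * ‖Lam e‖) + M * ‖Lam e‖ :=
              add_le_add (hαbd e) (S.le_opNorm _)
          _ = t * ‖Lam e‖ + α * ‖J e‖ := by rw [htdef]; ring
      have hJe' : ‖J e‖ ≤ t ^ n * ‖J d‖ := hJe n d
      calc ‖Lam ((S'' ^ (n + 1)) d)‖ = ‖Lam (S'' e)‖ := by rw [hstep]
        _ ≤ t * ‖Lam e‖ + α * ‖J e‖ := h5
        _ ≤ t * (t ^ n * ‖Lam d‖ + (α / t) * (n : ℝ) * t ^ n * ‖J d‖)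
              + α * (t ^ n * ‖J d‖) :=
            add_le_add (mul_le_mul_of_nonneg_left (ih d) ht.le)
              (mul_le_mul_of_nonneg_left hJe' hα)
        _ = t ^ (n + 1) * ‖Lam d‖ + (α / t) * ((n : ℕ) + 1 : ℝ) * t ^ (n + 1) * ‖J d‖ := by
            field_simp
            ring
        _ = t ^ (n + 1) * ‖Lam d‖ + (α / t) * ((n + 1 : ℕ) : ℝ) * t ^ (n + 1) * ‖J d‖ := by
            push_cast
            ring
  -- graph-norm estimate on powers
  have hCn : ∀ n : ℕ, ∀ d : D, ‖(S'' ^ n) d‖ ≤ (1 + (α / t) * (n : ℝ)) * t ^ n * ‖d‖ := by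
    intro n d
    have h6 : ‖J ((S'' ^ n) d)‖ ≤ t ^ n * ‖J d‖ := hJe n d
    have h7 := hLampow n d
    have e1 : t ^ n * ‖d‖ = t ^ n * ‖J d‖ + t ^ n * ‖Lam d‖ := by rw [hgraph d]; ring
    have e2 : (α / t) * (n : ℝ) * t ^ n * ‖J d‖ ≤ (α / t) * (n : ℝ) * t ^ n * ‖d‖ := by
      apply mul_le_mul_of_nonneg_left (hJle d)
      positivity
    rw [hgraph ((S'' ^ n) d)]
    nlinarith [norm_nonneg (J d), norm_nonneg (Lam d)]
  have hnorm : ∀ n : ℕ, ‖S'' ^ n‖ ≤ (1 + (α / t) * (n : ℝ)) * t ^ n := fun n =>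
    ContinuousLinearMap.opNorm_le_bound _ (by positivity) (hCn n)
  -- choose a power where the estimate beats `s ^ (n+1)`
  obtain ⟨n, hn⟩ := aux_exists_pow_le ht hts (div_nonneg hα ht.le)
  have hSn1 : ‖S'' ^ (n + 1)‖ ≤ s ^ (n + 1) := by
    refine (hnorm (n + 1)).trans ?_
    calc (1 + α / t * ((n + 1 : ℕ) : ℝ)) * t ^ (n + 1)
        = (1 + α / t * ((n : ℝ) + 1)) * t ^ (n + 1) := by push_cast; ring
      _ ≤ s ^ (n + 1) := hn
  -- conclude via the spectral radius power estimate
  have hfinal := spectrum.spectralRadius_le_pow_nnnorm_pow_one_div ℂ S'' n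
  have h1le : (‖(1 : D →L[ℂ] D)‖₊ : ENNReal) ≤ 1 := by
    rw [← ofReal_norm_eq_coe_nnnorm]
    refine ENNReal.ofReal_le_one.mpr ?_
    simpa [ContinuousLinearMap.one_def] using (ContinuousLinearMap.norm_id_le (E := D))
  have hB : (‖S'' ^ (n + 1)‖₊ : ENNReal) ≤ ENNReal.ofReal s ^ (n + 1) := by
    rw [← ofReal_norm_eq_coe_nnnorm, ← ENNReal.ofReal_pow hs.le]
    exact ENNReal.ofReal_le_ofReal hSn1
  have hexp0 : (0:ℝ) ≤ 1 / ((n:ℝ) + 1) := by positivity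
  calc spectralRadius ℂ S''
      ≤ (‖S'' ^ (n + 1)‖₊ : ENNReal) ^ (1 / ((n:ℝ) + 1)) *
        (‖(1 : D →L[ℂ] D)‖₊ : ENNReal) ^ (1 / ((n:ℝ) + 1)) := by
        simpa using hfinal
    _ ≤ (ENNReal.ofReal s ^ (n + 1)) ^ (1 / ((n:ℝ) + 1)) * 1 ^ (1 / ((n:ℝ) + 1)) :=
        mul_le_mul' (ENNReal.rpow_le_rpow hB hexp0) (ENNReal.rpow_le_rpow h1le hexp0)
    _ = ENNReal.ofReal s := by
        rw [ENNReal.one_rpow, mul_one, one_div]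
        have : ((n:ℝ) + 1)⁻¹ = (((n + 1 : ℕ)):ℝ)⁻¹ := by push_cast; ring
        rw [this]
        exact ENNReal.pow_rpow_inv_natCast (by omega) _
end

section
/- Under the same hypotheses as Lemma specRad (S bounded mapping Dom(Λ) into itself, ΛSx − SΛx = Kx with ‖Kx‖ ≤ α‖x‖ + β‖Λx‖ on Dom(Λ)), for every k ∈ ℕ and x ∈ Dom(Λ) one has ‖S^k x‖_Λ ≤ (‖S‖ + β)^k ‖x‖_Λ + kα(‖S‖ + β)^{k−1} ‖x‖. -/
/-- Let `Λ` be a closed operator on a Banach space `X`.  We model the domain of `Λ`, equipped with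
the graph norm `‖x‖_Λ = ‖x‖ + ‖Λx‖`, as a Banach space `D` together with an injective continuous
inclusion `J : D → X` and the operator `Λ : D → X`, subject to `‖d‖_D = ‖J d‖ + ‖Λ d‖`
(closedness of `Λ` corresponds to completeness of `D`).

Let `S : X → X` be bounded with `S(Dom Λ) ⊆ Dom Λ`, i.e. there is a linear map
`S' : D → D` with `J ∘ S' = S ∘ J`, and let `K : D → X` satisfy the commutator relation
`Λ(S'd) − S(Λd) = Kd` and the relative bound `‖Kd‖ ≤ α‖Jd‖ + β‖Λd‖` with `α, β ≥ 0`.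
Then for every `k ∈ ℕ` and every `d ∈ D`:
`‖S'^k d‖_Λ ≤ (‖S‖ + β)^k ‖d‖_Λ + k·α·(‖S‖ + β)^(k−1) ‖J d‖`. -/
theorem stmt1
    {X D : Type*} [NormedAddCommGroup X] [NormedSpace ℂ X] [CompleteSpace X]
    [NormedAddCommGroup D] [NormedSpace ℂ D] [CompleteSpace D]
    (J : D →L[ℂ] X) (hJ : Function.Injective J)
    (Lam : D →L[ℂ] X)
    (hgraph : ∀ d : D, ‖d‖ = ‖J d‖ + ‖Lam d‖)
    (S : X →L[ℂ] X) (S' : Module.End ℂ D)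
    (hS' : ∀ d : D, J (S' d) = S (J d))
    (K : D →ₗ[ℂ] X)
    (α β : ℝ) (hα : 0 ≤ α) (hβ : 0 ≤ β)
    (hcomm : ∀ d : D, Lam (S' d) - S (Lam d) = K d)
    (hK : ∀ d : D, ‖K d‖ ≤ α * ‖J d‖ + β * ‖Lam d‖) :
    ∀ (k : ℕ) (d : D),
      ‖(S' ^ k) d‖ ≤ (‖S‖ + β) ^ k * ‖d‖ + (k : ℝ) * α * (‖S‖ + β) ^ (k - 1) * ‖J d‖ := by
  have hS0 : (0:ℝ) ≤ ‖S‖ := norm_nonneg S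
  have hc0 : (0:ℝ) ≤ ‖S‖ + β := by linarith
  have hJS : ∀ d : D, ‖J (S' d)‖ ≤ ‖S‖ * ‖J d‖ := by
    intro d; rw [hS']; exact S.le_opNorm _
  have hstep : ∀ d : D, ‖S' d‖ ≤ (‖S‖ + β) * ‖d‖ + α * ‖J d‖ := by
    intro d
    have heq : Lam (S' d) = S (Lam d) + K d := by
      have := hcomm d
      rw [sub_eq_iff_eq_add] at this
      rw [this]; abel
    have h1 : ‖Lam (S' d)‖ ≤ ‖S‖ * ‖Lam d‖ + (α * ‖J d‖ + β * ‖Lam d‖) := by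
      calc ‖Lam (S' d)‖ = ‖S (Lam d) + K d‖ := by rw [heq]
        _ ≤ ‖S (Lam d)‖ + ‖K d‖ := norm_add_le _ _
        _ ≤ ‖S‖ * ‖Lam d‖ + (α * ‖J d‖ + β * ‖Lam d‖) :=
            add_le_add (S.le_opNorm _) (hK d)
    have h2 := hJS d
    have h3 : ‖Lam d‖ ≤ ‖d‖ := by
      have := hgraph d; have := norm_nonneg (J d); linarith
    have h4 := hgraph (S' d)
    have h5 := hgraph d
    nlinarith [norm_nonneg (Lam d), mul_le_mul_of_nonneg_left h3 hβ]
  have hJk : ∀ (k : ℕ) (d : D), ‖J ((S' ^ k) d)‖ ≤ ‖S‖ ^ k * ‖J d‖ := by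
    intro k
    induction k with
    | zero => intro d; simp
    | succ n ih =>
      intro d
      have hpow : (S' ^ (n + 1)) d = S' ((S' ^ n) d) := by
        rw [pow_succ']; rfl
      rw [hpow]
      calc ‖J (S' ((S' ^ n) d))‖ ≤ ‖S‖ * ‖J ((S' ^ n) d)‖ := hJS _
        _ ≤ ‖S‖ * (‖S‖ ^ n * ‖J d‖) := mul_le_mul_of_nonneg_left (ih d) hS0
        _ = ‖S‖ ^ (n + 1) * ‖J d‖ := by ring
  intro k
  induction k with
  | zero => intro d; simp
  | succ n ih =>
    intro d
    have hpow : (S' ^ (n + 1)) d = S' ((S' ^ n) d) := by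
      rw [pow_succ']; rfl
    rw [hpow]
    simp only [Nat.add_sub_cancel]
    push_cast
    have hSc : ‖S‖ ^ n ≤ (‖S‖ + β) ^ n := pow_le_pow_left₀ hS0 (by linarith) n
    have hmul : (‖S‖ + β) * ((n : ℝ) * α * (‖S‖ + β) ^ (n - 1))
        ≤ (n : ℝ) * α * (‖S‖ + β) ^ n := by
      cases n with
      | zero => simp
      | succ m =>
        simp only [Nat.add_sub_cancel]
        exact le_of_eq (by push_cast; ring)
    have hJd := norm_nonneg (J d)
    have hSα := mul_le_mul_of_nonneg_left hSc hα
    have key : (‖S‖ + β) * ((n : ℝ) * α * (‖S‖ + β) ^ (n - 1)) + α * ‖S‖ ^ n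
        ≤ ((n : ℝ) + 1) * α * (‖S‖ + β) ^ n := by nlinarith
    have key' := mul_le_mul_of_nonneg_right key hJd
    calc ‖S' ((S' ^ n) d)‖
        ≤ (‖S‖ + β) * ‖(S' ^ n) d‖ + α * ‖J ((S' ^ n) d)‖ := hstep _
      _ ≤ (‖S‖ + β) * ((‖S‖ + β) ^ n * ‖d‖ + (n : ℝ) * α * (‖S‖ + β) ^ (n - 1) * ‖J d‖)
            + α * (‖S‖ ^ n * ‖J d‖) :=
          add_le_add (mul_le_mul_of_nonneg_left (ih d) hc0)
            (mul_le_mul_of_nonneg_left (hJk n d) hα)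
      _ = (‖S‖ + β) ^ (n + 1) * ‖d‖
            + (((‖S‖ + β) * ((n : ℝ) * α * (‖S‖ + β) ^ (n - 1)) + α * ‖S‖ ^ n) * ‖J d‖) := by
          ring
      _ ≤ (‖S‖ + β) ^ (n + 1) * ‖d‖ + ((n : ℝ) + 1) * α * (‖S‖ + β) ^ n * ‖J d‖ := by
          nlinarith
end

section
/- Let P and Q be orthogonal projections on a Hilbert space H with ‖P − Q‖ < 1, so that Ran Q = { f ⊕ Xf : f ∈ Ran P } for a bounded operator X: Ran P → Ran P⊥. Let Y be the skew-symmetric bounded operator given in block form with respect to Ran P ⊕ Ran P⊥ by Y(f ⊕ g) = (−X*g) ⊕ (Xf). Then I + Y and I − Y are bijective and (I − Y)(I + Y) equals the block-diagonal operator (I + X*X) ⊕ (I + XX*). -/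
open scoped InnerProductSpace

section aux

variable {H : Type*} [NormedAddCommGroup H] [InnerProductSpace ℂ H] [CompleteSpace H]

/-- `1 + X†X` is a unit, hence bijective. -/
lemma stmt6_aux_isUnit {E F : Type*} [NormedAddCommGroup E] [InnerProductSpace ℂ E]
    [NormedAddCommGroup F] [InnerProductSpace ℂ F] [CompleteSpace E] [CompleteSpace F]
    (X : E →L[ℂ] F) : Function.Bijective ⇑(1 + X.adjoint ∘L X) := by
  rw [← ContinuousLinearMap.isUnit_iff_bijective]
  refine ContinuousLinearMap.isUnit_of_forall_le_norm_inner_map _ (c := 1) one_pos fun x => ?_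
  have h1 : RCLike.re ⟪(1 + X.adjoint ∘L X) x, x⟫_ℂ = ‖x‖ ^ 2 + ‖X x‖ ^ 2 := by
    simp only [ContinuousLinearMap.add_apply, ContinuousLinearMap.one_apply,
      ContinuousLinearMap.comp_apply, inner_add_left, ContinuousLinearMap.adjoint_inner_left,
      map_add, inner_self_eq_norm_sq]
  have h2 : RCLike.re ⟪(1 + X.adjoint ∘L X) x, x⟫_ℂ ≤ ‖⟪(1 + X.adjoint ∘L X) x, x⟫_ℂ‖ :=
    RCLike.re_le_norm _
  rw [h1] at h2
  rw [NNReal.coe_one, mul_one]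
  linarith [h2, sq_nonneg ‖X x‖]

end aux

set_option maxHeartbeats 1000000 in
/-- Let `P` and `Q` be orthogonal projections on a complex Hilbert space `H` with `‖P − Q‖ < 1`,
so that `Ran Q = { f ⊕ Xf : f ∈ Ran P }` for a bounded operator `X : Ran P → Ran P⊥`
(here `P⊥ = 1 − P`).  Let `Y` be the bounded operator given in block form with respect to
`Ran P ⊕ Ran P⊥` by `Y(f ⊕ g) = (−X*g) ⊕ (Xf)`.  Then `I + Y` and `I − Y` are bijective and
`(I − Y)(I + Y)` equals the block-diagonal operator `(I + X*X) ⊕ (I + XX*)`. -/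
theorem stmt6
    {H : Type*} [NormedAddCommGroup H] [InnerProductSpace ℂ H] [CompleteSpace H]
    (P Q : H →L[ℂ] H)
    (hPproj : IsIdempotentElem P) (hPsa : IsSelfAdjoint P)
    (hQproj : IsIdempotentElem Q) (hQsa : IsSelfAdjoint Q)
    (hPQ : ‖P - Q‖ < 1)
    [CompleteSpace (LinearMap.range (P : H →ₗ[ℂ] H))] [CompleteSpace (LinearMap.range ((1 - P : H →L[ℂ] H) : H →ₗ[ℂ] H))]
    (X : LinearMap.range (P : H →ₗ[ℂ] H) →L[ℂ] LinearMap.range ((1 - P : H →L[ℂ] H) : H →ₗ[ℂ] H))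
    (hgraph : (LinearMap.range (Q : H →ₗ[ℂ] H) : Set H) =
      {h : H | ∃ f : LinearMap.range (P : H →ₗ[ℂ] H), h = (f : H) + (X f : H)})
    (Y : H →L[ℂ] H)
    (hY : ∀ (f : LinearMap.range (P : H →ₗ[ℂ] H)) (g : LinearMap.range ((1 - P : H →L[ℂ] H) : H →ₗ[ℂ] H)),
      Y ((f : H) + (g : H)) = -((X.adjoint g : H)) + ((X f : H))) :
    Function.Bijective ⇑((1 : H →L[ℂ] H) + Y) ∧ Function.Bijective ⇑((1 : H →L[ℂ] H) - Y) ∧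
      ∀ (f : LinearMap.range (P : H →ₗ[ℂ] H)) (g : LinearMap.range ((1 - P : H →L[ℂ] H) : H →ₗ[ℂ] H)),
        (((1 : H →L[ℂ] H) - Y) * ((1 : H →L[ℂ] H) + Y)) ((f : H) + (g : H)) =
          (((1 + X.adjoint ∘L X) f : H)) + (((1 + X ∘L X.adjoint) g : H)) := by
  -- basic projection facts
  have hPf : ∀ f : LinearMap.range (P : H →ₗ[ℂ] H), P (f : H) = (f : H) := by
    rintro ⟨_, x, rfl⟩
    simpa using congrFun (congrArg DFunLike.coe hPproj) x
  have hPg : ∀ g : LinearMap.range ((1 - P : H →L[ℂ] H) : H →ₗ[ℂ] H), P (g : H) = 0 := by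
    rintro ⟨_, x, rfl⟩
    have := congrFun (congrArg DFunLike.coe hPproj) x
    simp only [ContinuousLinearMap.mul_apply] at this
    simp [ContinuousLinearMap.sub_apply, this]
  -- decomposition of an arbitrary element
  have hdec : ∀ h : H, h = ((⟨P h, LinearMap.mem_range_self _ h⟩ : LinearMap.range (P : H →ₗ[ℂ] H)) : H)
      + ((⟨(1 - P) h, LinearMap.mem_range_self _ h⟩ : LinearMap.range ((1 - P : H →L[ℂ] H) : H →ₗ[ℂ] H)) : H) := by
    intro h
    simp [ContinuousLinearMap.sub_apply]
  -- Y on a decomposed element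
  have hYapp : ∀ h : H, Y h = -((X.adjoint ⟨(1 - P) h, LinearMap.mem_range_self _ h⟩ : H))
      + ((X ⟨P h, LinearMap.mem_range_self _ h⟩ : H)) := by
    intro h
    conv_lhs => rw [hdec h]
    exact hY _ _
  -- the key computation
  have key : ∀ (f : LinearMap.range (P : H →ₗ[ℂ] H)) (g : LinearMap.range ((1 - P : H →L[ℂ] H) : H →ₗ[ℂ] H)),
      (((1 : H →L[ℂ] H) - Y) * ((1 : H →L[ℂ] H) + Y)) ((f : H) + (g : H)) =
        (((1 + X.adjoint ∘L X) f : H)) + (((1 + X ∘L X.adjoint) g : H)) := by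
    intro f g
    have h1 : ((1 : H →L[ℂ] H) + Y) ((f : H) + (g : H))
        = ((f - X.adjoint g : LinearMap.range (P : H →ₗ[ℂ] H)) : H)
          + ((g + X f : LinearMap.range ((1 - P : H →L[ℂ] H) : H →ₗ[ℂ] H)) : H) := by
      simp only [ContinuousLinearMap.add_apply, ContinuousLinearMap.one_apply, hY f g]
      simp only [Submodule.coe_add, Submodule.coe_sub]
      abel
    rw [ContinuousLinearMap.mul_apply, h1, ContinuousLinearMap.sub_apply,
      ContinuousLinearMap.one_apply, hY (f - X.adjoint g) (g + X f)]
    simp only [map_add, map_sub, ContinuousLinearMap.comp_apply, ContinuousLinearMap.add_apply,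
      ContinuousLinearMap.one_apply]
    simp only [Submodule.coe_add, Submodule.coe_sub]
    abel
  -- S is bijective
  set S := (((1 : H →L[ℂ] H) - Y) * ((1 : H →L[ℂ] H) + Y)) with hS
  obtain ⟨hAinj, hAsurj⟩ := stmt6_aux_isUnit X
  obtain ⟨hBinj, hBsurj⟩ := stmt6_aux_isUnit X.adjoint
  rw [ContinuousLinearMap.adjoint_adjoint] at hBinj hBsurj
  have huniq : ∀ (u u' : LinearMap.range (P : H →ₗ[ℂ] H)) (v v' : LinearMap.range ((1 - P : H →L[ℂ] H) : H →ₗ[ℂ] H)),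
      (u : H) + (v : H) = (u' : H) + (v' : H) → u = u' ∧ v = v' := by
    intro u u' v v' h
    have h1 : (u : H) = (u' : H) := by
      have := congrArg P h
      simpa only [map_add, hPf, hPg, add_zero] using this
    have h2 : (v : H) = (v' : H) := by
      rw [h1] at h
      exact add_left_cancel h
    exact ⟨Subtype.coe_injective h1, Subtype.coe_injective h2⟩
  have hSbij : Function.Bijective ⇑S := by
    constructor
    · intro a b hab
      rw [hdec a, hdec b] at hab ⊢
      rw [key, key] at hab
      set fa : LinearMap.range (P : H →ₗ[ℂ] H) := ⟨P a, LinearMap.mem_range_self _ a⟩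
      set ga : LinearMap.range ((1 - P : H →L[ℂ] H) : H →ₗ[ℂ] H) := ⟨(1 - P) a, LinearMap.mem_range_self _ a⟩
      set fb : LinearMap.range (P : H →ₗ[ℂ] H) := ⟨P b, LinearMap.mem_range_self _ b⟩
      set gb : LinearMap.range ((1 - P : H →L[ℂ] H) : H →ₗ[ℂ] H) := ⟨(1 - P) b, LinearMap.mem_range_self _ b⟩
      obtain ⟨hf, hg⟩ := huniq _ _ _ _ hab
      rw [hAinj hf, hBinj hg]
    · intro h
      obtain ⟨f, hf⟩ := hAsurj ⟨P h, LinearMap.mem_range_self _ h⟩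
      obtain ⟨g, hg⟩ := hBsurj ⟨(1 - P) h, LinearMap.mem_range_self _ h⟩
      refine ⟨(f : H) + (g : H), ?_⟩
      rw [key f g, hf, hg]
      exact (hdec h).symm
  -- commute: S = (1+Y)(1-Y)
  have hcomm : S = ((1 : H →L[ℂ] H) + Y) * ((1 : H →L[ℂ] H) - Y) := by
    rw [hS]; noncomm_ring
  have hcomp1 : ⇑S = ⇑((1 : H →L[ℂ] H) - Y) ∘ ⇑((1 : H →L[ℂ] H) + Y) := rfl
  have hcomp2 : ⇑S = ⇑((1 : H →L[ℂ] H) + Y) ∘ ⇑((1 : H →L[ℂ] H) - Y) := by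
    rw [hcomm]; rfl
  refine ⟨⟨?_, ?_⟩, ⟨?_, ?_⟩, key⟩
  · have := hSbij.injective
    rw [hcomp1] at this
    exact Function.Injective.of_comp this
  · have := hSbij.surjective
    rw [hcomp2] at this
    exact Function.Surjective.of_comp this
  · have := hSbij.injective
    rw [hcomp2] at this
    exact Function.Injective.of_comp this
  · have := hSbij.surjective
    rw [hcomp1] at this
    exact Function.Surjective.of_comp this
end

section
/- Let P and Q be orthogonal projections with ‖P − Q‖ < 1, X the bounded operator with Ran Q = {f ⊕ Xf : f ∈ Ran P}, and Y = [[0, −X*],[X, 0]]. Let 𝒞 be a subspace invariant under both P and Q with 𝒞 = (𝒞 ∩ Ran P) ⊕ (𝒞 ∩ Ran P⊥) =: 𝒞₊ ⊕ 𝒞₋. Then the following are equivalent: (i) I + X*X maps 𝒞₊ into itself; (ii) I + XX* maps 𝒞₋ into itself; (iii) Y maps 𝒞 into itself; (iv) I + Y maps 𝒞 into itself; (v) I − Y maps 𝒞 into itself. -/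
open scoped InnerProductSpace

section Stmt7Aux
variable {H : Type*} [NormedAddCommGroup H] [InnerProductSpace ℂ H] [CompleteSpace H]

lemma stmt7_Pfix {P : H →L[ℂ] H} (hP : IsIdempotentElem P) (f : LinearMap.range (P : H →ₗ[ℂ] H)) :
    P (f : H) = (f : H) := by
  obtain ⟨-, a, rfl⟩ := f
  simpa using DFunLike.congr_fun hP a

lemma stmt7_Pkill {P : H →L[ℂ] H} (hP : IsIdempotentElem P) (g : LinearMap.range ((1 - P : H →L[ℂ] H) : H →ₗ[ℂ] H)) :
    P (g : H) = 0 := by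
  obtain ⟨-, b, rfl⟩ := g
  have := DFunLike.congr_fun hP b
  simp only [ContinuousLinearMap.mul_apply] at this
  simp [ContinuousLinearMap.sub_apply, map_sub, this]

lemma stmt7_orth {P : H →L[ℂ] H} (hP : IsIdempotentElem P) (hPsa : IsSelfAdjoint P)
    (f : LinearMap.range (P : H →ₗ[ℂ] H)) (g : LinearMap.range ((1 - P : H →L[ℂ] H) : H →ₗ[ℂ] H)) :
    ⟪(f : H), (g : H)⟫_ℂ = 0 := by
  have hadj : ContinuousLinearMap.adjoint P = P :=
    ContinuousLinearMap.isSelfAdjoint_iff'.mp hPsa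
  calc ⟪(f : H), (g : H)⟫_ℂ = ⟪P (f : H), (g : H)⟫_ℂ := by rw [stmt7_Pfix hP f]
    _ = ⟪(f : H), P (g : H)⟫_ℂ := hPsa.isSymmetric _ _
    _ = 0 := by rw [stmt7_Pkill hP g, inner_zero_right]

lemma stmt7_injA {P : H →L[ℂ] H}
    [CompleteSpace (LinearMap.range (P : H →ₗ[ℂ] H))] [CompleteSpace (LinearMap.range ((1 - P : H →L[ℂ] H) : H →ₗ[ℂ] H))]
    (X : LinearMap.range (P : H →ₗ[ℂ] H) →L[ℂ] LinearMap.range ((1 - P : H →L[ℂ] H) : H →ₗ[ℂ] H)) {k k' : LinearMap.range (P : H →ₗ[ℂ] H)}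
    (h : k + X.adjoint (X k) = k' + X.adjoint (X k')) : k = k' := by
  have hAd : (k - k') + X.adjoint (X (k - k')) = 0 := by
    rw [map_sub, map_sub, sub_add_sub_comm, sub_eq_zero]
    exact h
  have h2 : ⟪(k - k') + X.adjoint (X (k - k')), k - k'⟫_ℂ = 0 := by
    rw [hAd, inner_zero_left]
  rw [inner_add_left, ContinuousLinearMap.adjoint_inner_left,
    inner_self_eq_norm_sq_to_K, inner_self_eq_norm_sq_to_K] at h2
  have h3 : (‖k - k'‖ ^ 2 + ‖X (k - k')‖ ^ 2 : ℝ) = 0 :=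
    Complex.ofReal_eq_zero.mp (by push_cast; exact h2)
  have h4 : ‖k - k'‖ = 0 := by nlinarith [sq_nonneg ‖X (k - k')‖, norm_nonneg (k - k')]
  exact sub_eq_zero.mp (norm_eq_zero.mp h4)

lemma stmt7_keyQ {P Q : H →L[ℂ] H} (hPproj : IsIdempotentElem P) (hPsa : IsSelfAdjoint P)
    (hQproj : IsIdempotentElem Q) (hQsa : IsSelfAdjoint Q)
    [CompleteSpace (LinearMap.range (P : H →ₗ[ℂ] H))] [CompleteSpace (LinearMap.range ((1 - P : H →L[ℂ] H) : H →ₗ[ℂ] H))]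
    (X : LinearMap.range (P : H →ₗ[ℂ] H) →L[ℂ] LinearMap.range ((1 - P : H →L[ℂ] H) : H →ₗ[ℂ] H))
    (hgraph : (LinearMap.range (Q : H →ₗ[ℂ] H) : Set H) =
      {h : H | ∃ f : LinearMap.range (P : H →ₗ[ℂ] H), h = (f : H) + (X f : H)})
    (f : LinearMap.range (P : H →ₗ[ℂ] H)) (g : LinearMap.range ((1 - P : H →L[ℂ] H) : H →ₗ[ℂ] H)) :
    ∃ k : LinearMap.range (P : H →ₗ[ℂ] H), Q ((f : H) + (g : H)) = (k : H) + (X k : H) ∧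
      k + X.adjoint (X k) = f + X.adjoint g := by
  set x := (f : H) + (g : H) with hx
  have hQx : Q x ∈ (LinearMap.range (Q : H →ₗ[ℂ] H) : Set H) := ⟨x, rfl⟩
  rw [hgraph] at hQx
  obtain ⟨k, hk⟩ := hQx
  refine ⟨k, hk, ?_⟩
  have hQadj : ContinuousLinearMap.adjoint Q = Q :=
    ContinuousLinearMap.isSelfAdjoint_iff'.mp hQsa
  have hperp : ∀ h : LinearMap.range (P : H →ₗ[ℂ] H), ⟪x - Q x, (h : H) + (X h : H)⟫_ℂ = 0 := by
    intro h
    have hmem : (h : H) + (X h : H) ∈ (LinearMap.range (Q : H →ₗ[ℂ] H) : Set H) := by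
      rw [hgraph]; exact ⟨h, rfl⟩
    obtain ⟨y, hy⟩ := hmem
    have hQQ : Q (Q x) = Q x := by simpa using DFunLike.congr_fun hQproj x
    have h0 : Q (x - Q x) = 0 := by rw [map_sub, hQQ, sub_self]
    calc ⟪x - Q x, (h : H) + (X h : H)⟫_ℂ = ⟪x - Q x, Q y⟫_ℂ := congrArg (fun z => ⟪x - Q x, z⟫_ℂ) hy.symm
      _ = ⟪Q (x - Q x), y⟫_ℂ := (hQsa.isSymmetric (x - Q x) y).symm
      _ = 0 := by rw [h0, inner_zero_left]
  have hdec : x - Q x = ((f - k : LinearMap.range (P : H →ₗ[ℂ] H)) : H) +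
      ((g - X k : LinearMap.range ((1 - P : H →L[ℂ] H) : H →ₗ[ℂ] H)) : H) := by
    rw [hk, hx]
    rw [show ((g - X k : LinearMap.range ((1 - P : H →L[ℂ] H) : H →ₗ[ℂ] H)) : H) = (g : H) - (X k : H) from rfl]
    push_cast
    abel
  have hw : ∀ h : LinearMap.range (P : H →ₗ[ℂ] H), ⟪(f - k) + X.adjoint (g - X k), h⟫_ℂ = 0 := by
    intro h
    have hthis := hperp h
    rw [hdec, inner_add_left, inner_add_right, inner_add_right] at hthis
    rw [stmt7_orth hPproj hPsa (f - k) (X h)] at hthis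
    have horth2 : ⟪((g - X k : LinearMap.range ((1 - P : H →L[ℂ] H) : H →ₗ[ℂ] H)) : H), (h : H)⟫_ℂ = 0 := by
      rw [← inner_conj_symm, stmt7_orth hPproj hPsa h (g - X k), map_zero]
    rw [horth2] at hthis
    have e1 : ⟪((f - k : LinearMap.range (P : H →ₗ[ℂ] H)) : H), (h : H)⟫_ℂ = ⟪f - k, h⟫_ℂ :=
      (Submodule.coe_inner _ _ _).symm
    have e2 : ⟪((g - X k : LinearMap.range ((1 - P : H →L[ℂ] H) : H →ₗ[ℂ] H)) : H),
        ((X h : LinearMap.range ((1 - P : H →L[ℂ] H) : H →ₗ[ℂ] H)) : H)⟫_ℂ = ⟪X.adjoint (g - X k), h⟫_ℂ := by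
      rw [← Submodule.coe_inner, ContinuousLinearMap.adjoint_inner_left]
    rw [e1, e2] at hthis
    rw [inner_add_left]
    linear_combination hthis
  have hw0 : (f - k) + X.adjoint (g - X k) = 0 := by
    have := hw ((f - k) + X.adjoint (g - X k))
    rwa [inner_self_eq_zero] at this
  have hfin : (f + X.adjoint g) - (k + X.adjoint (X k)) = 0 := by
    rw [← sub_add_sub_comm, ← map_sub]
    exact hw0
  exact (sub_eq_zero.mp hfin).symm

end Stmt7Aux

set_option maxHeartbeats 1000000 in
/-- Let `P` and `Q` be orthogonal projections with `‖P − Q‖ < 1`, `X : Ran P → Ran P⊥` the bounded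
operator with `Ran Q = {f ⊕ Xf : f ∈ Ran P}`, and `Y = [[0, −X*],[X, 0]]` (blockwise with
respect to `Ran P ⊕ Ran P⊥`, `P⊥ = 1 − P`).  Let `𝒞` be a subspace invariant under both `P`
and `Q` with `𝒞 = (𝒞 ∩ Ran P) ⊕ (𝒞 ∩ Ran P⊥)` (equivalently, `P 𝒞 ⊆ 𝒞`).  Then the following
are equivalent:
(i) `I + X*X` maps `𝒞₊ := 𝒞 ∩ Ran P` into itself;
(ii) `I + XX*` maps `𝒞₋ := 𝒞 ∩ Ran P⊥` into itself;
(iii) `Y` maps `𝒞` into itself;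
(iv) `I + Y` maps `𝒞` into itself;
(v) `I − Y` maps `𝒞` into itself. -/
theorem stmt7
    {H : Type*} [NormedAddCommGroup H] [InnerProductSpace ℂ H] [CompleteSpace H]
    (P Q : H →L[ℂ] H)
    (hPproj : IsIdempotentElem P) (hPsa : IsSelfAdjoint P)
    (hQproj : IsIdempotentElem Q) (hQsa : IsSelfAdjoint Q)
    (hPQ : ‖P - Q‖ < 1)
    [CompleteSpace (LinearMap.range (P : H →ₗ[ℂ] H))] [CompleteSpace (LinearMap.range ((1 - P : H →L[ℂ] H) : H →ₗ[ℂ] H))]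
    (X : LinearMap.range (P : H →ₗ[ℂ] H) →L[ℂ] LinearMap.range ((1 - P : H →L[ℂ] H) : H →ₗ[ℂ] H))
    (hgraph : (LinearMap.range (Q : H →ₗ[ℂ] H) : Set H) =
      {h : H | ∃ f : LinearMap.range (P : H →ₗ[ℂ] H), h = (f : H) + (X f : H)})
    (Y : H →L[ℂ] H)
    (hY : ∀ (f : LinearMap.range (P : H →ₗ[ℂ] H)) (g : LinearMap.range ((1 - P : H →L[ℂ] H) : H →ₗ[ℂ] H)),
      Y ((f : H) + (g : H)) = -((X.adjoint g : H)) + ((X f : H)))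
    (C : Submodule ℂ H)
    (hCP : ∀ x ∈ C, P x ∈ C) (hCQ : ∀ x ∈ C, Q x ∈ C) :
    List.TFAE
      [ ∀ f : LinearMap.range (P : H →ₗ[ℂ] H), (f : H) ∈ C → (((1 + X.adjoint ∘L X) f : H)) ∈ C,
        ∀ g : LinearMap.range ((1 - P : H →L[ℂ] H) : H →ₗ[ℂ] H), (g : H) ∈ C → (((1 + X ∘L X.adjoint) g : H)) ∈ C,
        ∀ x ∈ C, Y x ∈ C,
        ∀ x ∈ C, ((1 : H →L[ℂ] H) + Y) x ∈ C,
        ∀ x ∈ C, ((1 : H →L[ℂ] H) - Y) x ∈ C ] := by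
  -- Y on the two pieces
  have hYf : ∀ f : LinearMap.range (P : H →ₗ[ℂ] H), Y (f : H) = ((X f : H)) := by
    intro f
    have := hY f 0
    rw [map_zero X.adjoint] at this
    simpa using this
  have hYg : ∀ g : LinearMap.range ((1 - P : H →L[ℂ] H) : H →ₗ[ℂ] H), Y (g : H) = -((X.adjoint g : H)) := by
    intro g
    have := hY 0 g
    rw [map_zero X] at this
    simpa using this
  -- coercion computations
  have hA : ∀ f : LinearMap.range (P : H →ₗ[ℂ] H),
      (((1 + X.adjoint ∘L X) f : H)) = (f : H) + ((X.adjoint (X f) : H)) := by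
    intro f; simp; rfl
  have hB : ∀ g : LinearMap.range ((1 - P : H →L[ℂ] H) : H →ₗ[ℂ] H),
      (((1 + X ∘L X.adjoint) g : H)) = (g : H) + ((X (X.adjoint g) : H)) := by
    intro g; simp; rfl
  -- from (i): X maps C₊ into C, and X* maps C₋ into C
  have step1X : (∀ f : LinearMap.range (P : H →ₗ[ℂ] H), (f : H) ∈ C → (((1 + X.adjoint ∘L X) f : H)) ∈ C) →
      ∀ f : LinearMap.range (P : H →ₗ[ℂ] H), (f : H) ∈ C → ((X f : H)) ∈ C := by
    intro h1 f hf
    set Af : LinearMap.range (P : H →ₗ[ℂ] H) := (1 + X.adjoint ∘L X) f with hAf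
    have hAfC : (Af : H) ∈ C := h1 f hf
    obtain ⟨k, hk1, hk2⟩ := stmt7_keyQ hPproj hPsa hQproj hQsa X hgraph Af
      (0 : LinearMap.range ((1 - P : H →L[ℂ] H) : H →ₗ[ℂ] H))
    have hAfeq : Af = f + X.adjoint (X f) := by
      ext; simp [hAf]; rfl
    have hkf : k = f := by
      apply stmt7_injA X
      rw [hk2, hAfeq]
      rw [map_zero X.adjoint, add_zero]
    rw [hkf] at hk1
    have hQC : Q ((Af : H) + ((0 : LinearMap.range ((1 - P : H →L[ℂ] H) : H →ₗ[ℂ] H)) : H)) ∈ C := by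
      simpa using hCQ _ hAfC
    rw [hk1] at hQC
    have := C.sub_mem hQC hf
    simpa using this
  have step1Xadj : (∀ f : LinearMap.range (P : H →ₗ[ℂ] H), (f : H) ∈ C → (((1 + X.adjoint ∘L X) f : H)) ∈ C) →
      ∀ g : LinearMap.range ((1 - P : H →L[ℂ] H) : H →ₗ[ℂ] H), (g : H) ∈ C → ((X.adjoint g : H)) ∈ C := by
    intro h1 g hg
    obtain ⟨k, hk1, hk2⟩ := stmt7_keyQ hPproj hPsa hQproj hQsa X hgraph
      (0 : LinearMap.range (P : H →ₗ[ℂ] H)) g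
    have hQC : Q (((0 : LinearMap.range (P : H →ₗ[ℂ] H)) : H) + (g : H)) ∈ C := by
      simpa using hCQ _ hg
    rw [hk1] at hQC
    have hkC : (k : H) ∈ C := by
      have := hCP _ hQC
      rwa [map_add, stmt7_Pfix hPproj k, stmt7_Pkill hPproj (X k), add_zero] at this
    have hAk : (((1 + X.adjoint ∘L X) k : H)) ∈ C := h1 k hkC
    have hAkeq : (1 + X.adjoint ∘L X) k = X.adjoint g := by
      have : (1 + X.adjoint ∘L X) k = k + X.adjoint (X k) := by ext; simp; rfl
      rw [this, hk2]
      simp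
    rwa [hAkeq] at hAk
  -- from (ii): X* maps C₋ into C, and X maps C₊ into C
  have step2Xadj : (∀ g : LinearMap.range ((1 - P : H →L[ℂ] H) : H →ₗ[ℂ] H), (g : H) ∈ C →
        (((1 + X ∘L X.adjoint) g : H)) ∈ C) →
      ∀ g : LinearMap.range ((1 - P : H →L[ℂ] H) : H →ₗ[ℂ] H), (g : H) ∈ C → ((X.adjoint g : H)) ∈ C := by
    intro h2 g hg
    set Bg : LinearMap.range ((1 - P : H →L[ℂ] H) : H →ₗ[ℂ] H) := (1 + X ∘L X.adjoint) g with hBg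
    have hBgC : (Bg : H) ∈ C := h2 g hg
    obtain ⟨k, hk1, hk2⟩ := stmt7_keyQ hPproj hPsa hQproj hQsa X hgraph
      (0 : LinearMap.range (P : H →ₗ[ℂ] H)) Bg
    have hkeq : k = X.adjoint g := by
      apply stmt7_injA X
      rw [hk2]
      have : X.adjoint Bg = X.adjoint g + X.adjoint (X (X.adjoint g)) := by
        rw [hBg, ContinuousLinearMap.add_apply, ContinuousLinearMap.one_apply, ContinuousLinearMap.comp_apply, map_add]
      rw [this]
      abel
    have hQC : Q (((0 : LinearMap.range (P : H →ₗ[ℂ] H)) : H) + (Bg : H)) ∈ C := by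
      simpa using hCQ _ hBgC
    rw [hk1, hkeq] at hQC
    have := hCP _ hQC
    rwa [map_add, stmt7_Pfix hPproj (X.adjoint g), stmt7_Pkill hPproj, add_zero] at this
  have step2X : (∀ g : LinearMap.range ((1 - P : H →L[ℂ] H) : H →ₗ[ℂ] H), (g : H) ∈ C →
        (((1 + X ∘L X.adjoint) g : H)) ∈ C) →
      ∀ f : LinearMap.range (P : H →ₗ[ℂ] H), (f : H) ∈ C → ((X f : H)) ∈ C := by
    intro h2 f hf
    obtain ⟨k, hk1, hk2⟩ := stmt7_keyQ hPproj hPsa hQproj hQsa X hgraph f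
      (0 : LinearMap.range ((1 - P : H →L[ℂ] H) : H →ₗ[ℂ] H))
    have hQC : Q ((f : H) + ((0 : LinearMap.range ((1 - P : H →L[ℂ] H) : H →ₗ[ℂ] H)) : H)) ∈ C := by
      simpa using hCQ _ hf
    rw [hk1] at hQC
    have hkC : (k : H) ∈ C := by
      have := hCP _ hQC
      rwa [map_add, stmt7_Pfix hPproj k, stmt7_Pkill hPproj (X k), add_zero] at this
    have hXkC : ((X k : H)) ∈ C := by
      have := C.sub_mem hQC hkC
      simpa using this
    have hBXk : (((1 + X ∘L X.adjoint) (X k) : H)) ∈ C := h2 (X k) hXkC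
    have hBXkeq : (1 + X ∘L X.adjoint) (X k) = X f := by
      have h1 : (1 + X ∘L X.adjoint) (X k) = X (k + X.adjoint (X k)) := by
        rw [map_add]; rfl
      rw [h1, hk2]
      rw [map_zero X.adjoint, add_zero]
    rwa [hBXkeq] at hBXk
  -- decomposition of elements of C
  have hdecomp : ∀ x : H, x ∈ C → ∃ (f : LinearMap.range (P : H →ₗ[ℂ] H)) (g : LinearMap.range ((1 - P : H →L[ℂ] H) : H →ₗ[ℂ] H)),
      x = (f : H) + (g : H) ∧ (f : H) ∈ C ∧ (g : H) ∈ C := by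
    intro x hx
    refine ⟨⟨P x, ⟨x, rfl⟩⟩, ⟨x - P x, ⟨x, by simp [ContinuousLinearMap.sub_apply]⟩⟩, ?_, ?_, ?_⟩
    · simp
    · exact hCP x hx
    · exact C.sub_mem hx (hCP x hx)
  tfae_have 3 → 1 := by
    intro h3 f hf
    have hXf : ((X f : H)) ∈ C := by
      have := h3 _ hf
      rwa [hYf f] at this
    have hXXf : ((X.adjoint (X f) : H)) ∈ C := by
      have := h3 _ hXf
      rw [hYg (X f)] at this
      simpa using C.neg_mem this
    rw [hA f]
    exact C.add_mem hf hXXf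
  tfae_have 3 → 2 := by
    intro h3 g hg
    have hXg : ((X.adjoint g : H)) ∈ C := by
      have := h3 _ hg
      rw [hYg g] at this
      simpa using C.neg_mem this
    have hXXg : ((X (X.adjoint g) : H)) ∈ C := by
      have := h3 _ hXg
      rwa [hYf (X.adjoint g)] at this
    rw [hB g]
    exact C.add_mem hg hXXg
  tfae_have 1 → 3 := by
    intro h1 x hx
    obtain ⟨f, g, hxd, hfC, hgC⟩ := hdecomp x hx
    rw [hxd, hY f g]
    exact C.add_mem (C.neg_mem (step1Xadj h1 g hgC)) (step1X h1 f hfC)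
  tfae_have 2 → 3 := by
    intro h2 x hx
    obtain ⟨f, g, hxd, hfC, hgC⟩ := hdecomp x hx
    rw [hxd, hY f g]
    exact C.add_mem (C.neg_mem (step2Xadj h2 g hgC)) (step2X h2 f hfC)
  tfae_have 3 → 4 := by
    intro h3 x hx
    rw [ContinuousLinearMap.add_apply, ContinuousLinearMap.one_apply]
    exact C.add_mem hx (h3 x hx)
  tfae_have 4 → 3 := by
    intro h4 x hx
    have := h4 x hx
    rw [ContinuousLinearMap.add_apply, ContinuousLinearMap.one_apply] at this
    simpa using C.sub_mem this hx
  tfae_have 3 → 5 := by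
    intro h3 x hx
    rw [ContinuousLinearMap.sub_apply, ContinuousLinearMap.one_apply]
    exact C.sub_mem hx (h3 x hx)
  tfae_have 5 → 3 := by
    intro h5 x hx
    have := h5 x hx
    rw [ContinuousLinearMap.sub_apply, ContinuousLinearMap.one_apply] at this
    simpa using C.sub_mem hx this
  tfae_finish
end

section
/- Let P and Q be orthogonal projections on a Hilbert space with ‖P − Q‖ < 1 and X: Ran P → Ran P⊥ the bounded operator such that Ran Q = {f ⊕ Xf : f ∈ Ran P}. Then the compression P Q restricted to Ran P, viewed as an operator on Ran P, equals (I_{Ran P} + X*X)^{-1}; in particular it is a bijection of Ran P onto itself. -/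
set_option maxHeartbeats 1000000

local notation "⟪" x ", " y "⟫" => @inner ℂ _ _ x y

/-- Let `P` and `Q` be orthogonal projections on a complex Hilbert space with `‖P − Q‖ < 1`, and
let `X : Ran P → Ran P⊥` be the bounded operator with `Ran Q = {f ⊕ Xf : f ∈ Ran P}`
(`P⊥ = 1 − P`).  Then the compression `P Q` restricted to `Ran P`, viewed as an operator on
`Ran P`, equals `(I + X*X)⁻¹`; in particular it is a bijection of `Ran P` onto itself. -/
theorem stmt8
    {H : Type*} [NormedAddCommGroup H] [InnerProductSpace ℂ H] [CompleteSpace H]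
    (P Q : H →L[ℂ] H)
    (hPproj : IsIdempotentElem P) (hPsa : IsSelfAdjoint P)
    (hQproj : IsIdempotentElem Q) (hQsa : IsSelfAdjoint Q)
    (hPQ : ‖P - Q‖ < 1)
    [CompleteSpace (LinearMap.range (P : H →ₗ[ℂ] H))] [CompleteSpace (LinearMap.range ((1 - P : H →L[ℂ] H) : H →ₗ[ℂ] H))]
    (X : LinearMap.range (P : H →ₗ[ℂ] H) →L[ℂ] LinearMap.range ((1 - P : H →L[ℂ] H) : H →ₗ[ℂ] H))
    (hgraph : (LinearMap.range (Q : H →ₗ[ℂ] H) : Set H) =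
      {h : H | ∃ f : LinearMap.range (P : H →ₗ[ℂ] H), h = (f : H) + (X f : H)}) :
    -- `T f = P (Q f)` as an endomorphism of `Ran P`
    (∀ f : LinearMap.range (P : H →ₗ[ℂ] H),
        (1 + X.adjoint ∘L X) (⟨P (Q (f : H)), ⟨Q (f : H), rfl⟩⟩ : LinearMap.range (P : H →ₗ[ℂ] H)) = f) ∧
      Function.Bijective
        (fun f : LinearMap.range (P : H →ₗ[ℂ] H) =>
          (⟨P (Q (f : H)), ⟨Q (f : H), rfl⟩⟩ : LinearMap.range (P : H →ₗ[ℂ] H))) := by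
  classical
  have hPP : ∀ y : H, P (P y) = P y := fun y => by
    have := DFunLike.congr_fun hPproj y
    simpa [ContinuousLinearMap.mul_apply] using this
  have hQQ : ∀ y : H, Q (Q y) = Q y := fun y => by
    have := DFunLike.congr_fun hQproj y
    simpa [ContinuousLinearMap.mul_apply] using this
  have hPfix : ∀ u : LinearMap.range (P : H →ₗ[ℂ] H), P (u : H) = (u : H) := by
    rintro ⟨_, y, rfl⟩
    exact hPP y
  have hPker : ∀ v : LinearMap.range ((1 - P : H →L[ℂ] H) : H →ₗ[ℂ] H), P (v : H) = 0 := by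
    rintro ⟨_, y, rfl⟩
    simp only [ContinuousLinearMap.coe_coe, ContinuousLinearMap.sub_apply, ContinuousLinearMap.one_apply, map_sub]
    rw [hPP y, sub_self]
  have hPsym : ∀ x y : H, ⟪P x, y⟫ = ⟪x, P y⟫ := fun x y => by
    conv_rhs => rw [← hPsa.adjoint_eq]
    rw [ContinuousLinearMap.adjoint_inner_right]
  have hQsym : ∀ x y : H, ⟪Q x, y⟫ = ⟪x, Q y⟫ := fun x y => by
    conv_rhs => rw [← hQsa.adjoint_eq]
    rw [ContinuousLinearMap.adjoint_inner_right]
  have horth : ∀ (u : LinearMap.range (P : H →ₗ[ℂ] H)) (v : LinearMap.range ((1 - P : H →L[ℂ] H) : H →ₗ[ℂ] H)),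
      ⟪(u : H), (v : H)⟫ = 0 := by
    intro u v
    have h := hPsym (u : H) (v : H)
    rw [hPfix u, hPker v, inner_zero_right] at h
    exact h
  have horth' : ∀ (v : LinearMap.range ((1 - P : H →L[ℂ] H) : H →ₗ[ℂ] H)) (u : LinearMap.range (P : H →ₗ[ℂ] H)),
      ⟪(v : H), (u : H)⟫ = 0 := fun v u => inner_eq_zero_symm.mp (horth u v)
  -- From the graph relation: every `Q f` decomposes, and the decomposition inverts `1 + X*X`.
  have hinv : ∀ f g : LinearMap.range (P : H →ₗ[ℂ] H), Q (f : H) = (g : H) + (X g : H) →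
      (1 + X.adjoint ∘L X) g = f := by
    intro f g hg
    have hperp : ∀ h : LinearMap.range (P : H →ₗ[ℂ] H),
        ⟪((1 + X.adjoint ∘L X) g - f : LinearMap.range (P : H →ₗ[ℂ] H)), h⟫ = 0 := by
      intro h
      have hmem2 : (h : H) + (X h : H) ∈ (LinearMap.range (Q : H →ₗ[ℂ] H) : Set H) := by
        rw [hgraph]; exact ⟨h, rfl⟩
      obtain ⟨y, hy⟩ := hmem2
      have h1 : ⟪(f : H) - Q (f : H), (h : H) + (X h : H)⟫ = 0 := by
        rw [← hy, ContinuousLinearMap.coe_coe, inner_sub_left, hQsym (↑f) (Q y), hQQ y, sub_self]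
      rw [hg] at h1
      have h2 : ⟪(f : H), (h : H)⟫ = ⟪(g : H), (h : H)⟫ + ⟪(X g : H), (X h : H)⟫ := by
        simp only [inner_sub_left, inner_add_left, inner_add_right,
          horth f (X h), horth g (X h), horth' (X g) h] at h1
        linear_combination h1
      have e2 : ⟪(X.adjoint (X g) : LinearMap.range (P : H →ₗ[ℂ] H)), h⟫ = ⟪(X g : H), (X h : H)⟫ := by
        rw [ContinuousLinearMap.adjoint_inner_left]
        rfl
      simp only [ContinuousLinearMap.add_apply, ContinuousLinearMap.one_apply,
        ContinuousLinearMap.comp_apply, inner_sub_left, inner_add_left, e2]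
      have hcf : ⟪(g : LinearMap.range (P : H →ₗ[ℂ] H)), h⟫ = ⟪(g : H), (h : H)⟫ := rfl
      have hcf' : ⟪(f : LinearMap.range (P : H →ₗ[ℂ] H)), h⟫ = ⟪(f : H), (h : H)⟫ := rfl
      rw [hcf, hcf', h2]
      ring
    have h0 := hperp ((1 + X.adjoint ∘L X) g - f)
    rw [inner_self_eq_zero] at h0
    exact sub_eq_zero.mp h0
  have hfst : ∀ f : LinearMap.range (P : H →ₗ[ℂ] H),
      (1 + X.adjoint ∘L X) (⟨P (Q (f : H)), ⟨Q (f : H), rfl⟩⟩ : LinearMap.range (P : H →ₗ[ℂ] H)) = f := by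
    intro f
    have hmem : Q (f : H) ∈ (LinearMap.range (Q : H →ₗ[ℂ] H) : Set H) := ⟨(f : H), rfl⟩
    rw [hgraph] at hmem
    obtain ⟨g, hg⟩ := hmem
    have h1 : (⟨P (Q (f : H)), ⟨Q (f : H), rfl⟩⟩ : LinearMap.range (P : H →ₗ[ℂ] H)) = g := by
      apply Subtype.ext
      show P (Q (f : H)) = (g : H)
      rw [hg, map_add, hPfix g, hPker (X g), add_zero]
    rw [h1]
    exact hinv f g hg
  -- surjectivity computation: `Q ((1 + X*X) g) = g + X g`
  have hsurj : ∀ g : LinearMap.range (P : H →ₗ[ℂ] H),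
      Q ((((1 + X.adjoint ∘L X) g : LinearMap.range (P : H →ₗ[ℂ] H))) : H) = (g : H) + (X g : H) := by
    intro g
    have hQgXg : Q ((g : H) + (X g : H)) = (g : H) + (X g : H) := by
      have hm : (g : H) + (X g : H) ∈ (LinearMap.range (Q : H →ₗ[ℂ] H) : Set H) := by
        rw [hgraph]; exact ⟨g, rfl⟩
      obtain ⟨y, hy⟩ := hm
      rw [← hy, ContinuousLinearMap.coe_coe, hQQ]
    have hw : ∀ z ∈ (LinearMap.range (Q : H →ₗ[ℂ] H) : Set H),
        ⟪(X.adjoint (X g) : H) - (X g : H), z⟫ = 0 := by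
      intro z hz
      rw [hgraph] at hz
      obtain ⟨h, rfl⟩ := hz
      have e1 : ⟪(X.adjoint (X g) : H), (X h : H)⟫ = 0 := horth _ _
      have e2 : ⟪(X.adjoint (X g) : H), (h : H)⟫ = ⟪(X g : H), (X h : H)⟫ := by
        have h3 := ContinuousLinearMap.adjoint_inner_left X h (X g)
        rw [Submodule.coe_inner, Submodule.coe_inner] at h3
        exact h3
      rw [inner_sub_left, inner_add_right, inner_add_right, e1, e2, horth' (X g) h]
      ring
    have hQw : Q ((X.adjoint (X g) : H) - (X g : H)) = 0 := by
      have h0 : ⟪Q ((X.adjoint (X g) : H) - (X g : H)),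
          Q ((X.adjoint (X g) : H) - (X g : H))⟫ = 0 := by
        rw [hQsym, hQQ]
        exact hw _ ⟨_, rfl⟩
      rw [inner_self_eq_zero] at h0
      exact h0
    have hcoe : (((1 + X.adjoint ∘L X) g : LinearMap.range (P : H →ₗ[ℂ] H)) : H)
        = ((g : H) + (X g : H)) + ((X.adjoint (X g) : H) - (X g : H)) := by
      have : ((1 + X.adjoint ∘L X) g : LinearMap.range (P : H →ₗ[ℂ] H))
          = g + X.adjoint (X g) := by
        simp [ContinuousLinearMap.add_apply]
        rfl
      rw [this, Submodule.coe_add]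
      abel
    rw [hcoe, map_add, hQgXg, hQw, add_zero]
  refine ⟨hfst, ?_, ?_⟩
  · intro a b hab
    have hab' : (⟨P (Q (a : H)), ⟨Q (a : H), rfl⟩⟩ : LinearMap.range (P : H →ₗ[ℂ] H))
        = ⟨P (Q (b : H)), ⟨Q (b : H), rfl⟩⟩ := hab
    rw [← hfst a, ← hfst b, hab']
  · intro g
    refine ⟨(1 + X.adjoint ∘L X) g, ?_⟩
    apply Subtype.ext
    show P (Q _) = (g : H)
    rw [hsurj g, map_add, hPfix g, hPker (X g), add_zero]
end

section
/- Let A be self-adjoint with spectral projections P± (for (0,∞) and (−∞,0]) and let V be a symmetric A-bounded operator that is infinitesimal with respect to A. Set B = A + V with spectral projections Q± and K := (P₊Q₋V − P₊VQ₋)|_{Ran P₊}, Λ := A|_{Ran P₊}. Then for every b ∈ (0,1) and a ≥ 0 with ‖Vx‖ ≤ a‖x‖ + b‖Ax‖ on Dom(A) one has ‖Kx‖ ≤ a(‖P₊Q₋‖ + (1+b)/(1−b))‖x‖ + b(‖P₊Q₋‖ + (1+b)/(1−b))‖Λx‖ for all x ∈ Dom(Λ); consequently K is Λ-bounded with Λ-bound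 0. -/
open scoped InnerProductSpace

lemma proj_norm_apply_le
    {H : Type*} [NormedAddCommGroup H] [InnerProductSpace ℂ H] [CompleteSpace H]
    (T : H →L[ℂ] H) (hT : IsIdempotentElem T) (hTsa : IsSelfAdjoint T) (x : H) :
    ‖T x‖ ≤ ‖x‖ := by
  have h1 : ⟪T x, T x⟫_ℂ = ⟪x, T (T x)⟫_ℂ := by
    have := ContinuousLinearMap.adjoint_inner_left T (T x) x
    rwa [hTsa.adjoint_eq] at this
  have h2 : T (T x) = T x := by
    have := congrArg (fun S : H →L[ℂ] H => S x) hT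
    simpa using this
  have h3 : (‖T x‖ : ℝ) ^ 2 = (⟪x, T x⟫_ℂ).re := by
    rw [← inner_self_eq_norm_sq (𝕜 := ℂ) (T x), h1, h2]
    rfl
  have h4 : (⟪x, T x⟫_ℂ).re ≤ ‖x‖ * ‖T x‖ := by
    calc (⟪x, T x⟫_ℂ).re ≤ ‖⟪x, T x⟫_ℂ‖ := Complex.re_le_norm _
      _ ≤ ‖x‖ * ‖T x‖ := norm_inner_le_norm _ _
  rcases le_or_gt ‖T x‖ 0 with h | h
  · exact h.trans (norm_nonneg x)
  · nlinarith [h3, h4]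

/-- Let `A` be self-adjoint (modelled as a symmetric linear map on its domain `DA`) with spectral
projections `P₊ = E_A((0,∞))` and `P₋ = 1 − P₊`, and let `V` be a symmetric operator that is
infinitesimally `A`-bounded.  Set `B = A + V` (self-adjoint by Kato–Rellich) with spectral
projection `Q₋ = E_B((−∞,0])`, which commutes with `B` and maps `Dom(A)` into itself, and put
`K := (P₊Q₋V − P₊VQ₋)|_{Ran P₊}` and `Λ := A|_{Ran P₊}`.  Then for every `b ∈ (0,1)` and
`a ≥ 0` with `‖Vx‖ ≤ a‖x‖ + b‖Ax‖` on `Dom(A)` one has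
`‖Kx‖ ≤ a(‖P₊Q₋‖ + (1+b)/(1−b))‖x‖ + b(‖P₊Q₋‖ + (1+b)/(1−b))‖Λx‖` for all `x ∈ Dom(Λ)`;
consequently `K` is `Λ`-bounded with `Λ`-bound `0`. -/
theorem stmt10
    {H : Type*} [NormedAddCommGroup H] [InnerProductSpace ℂ H] [CompleteSpace H]
    (DA : Submodule ℂ H) (A V : DA →ₗ[ℂ] H)
    (hAsymm : ∀ x y : DA, ⟪A x, (y : H)⟫_ℂ = ⟪(x : H), A y⟫_ℂ)
    (hVsymm : ∀ x y : DA, ⟪V x, (y : H)⟫_ℂ = ⟪(x : H), V y⟫_ℂ)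
    -- `V` is infinitesimally `A`-bounded:
    (hVinf : ∀ b : ℝ, 0 < b → ∃ a : ℝ, 0 ≤ a ∧
      ∀ x : DA, ‖V x‖ ≤ a * ‖(x : H)‖ + b * ‖A x‖)
    (P : H →L[ℂ] H) (hPproj : IsIdempotentElem P) (hPsa : IsSelfAdjoint P)
    (hPdom : ∀ x : H, x ∈ DA → P x ∈ DA)
    (hPA : ∀ x : DA, A ⟨P (x : H), hPdom _ x.2⟩ = P (A x))
    -- `P` is the spectral projection of `A` for `(0,∞)`:
    (hApos : ∀ x : DA, (x : H) ∈ LinearMap.range (P : H →ₗ[ℂ] H) → x ≠ 0 → 0 < (⟪(x : H), A x⟫_ℂ).re)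
    (hAnonpos : ∀ x : DA, (x : H) ∈ LinearMap.range (((1 : H →L[ℂ] H) - P : H →L[ℂ] H) : H →ₗ[ℂ] H) →
      (⟪(x : H), A x⟫_ℂ).re ≤ 0)
    (Qm : H →L[ℂ] H) (hQproj : IsIdempotentElem Qm) (hQsa : IsSelfAdjoint Qm)
    (hQdom : ∀ x : H, x ∈ DA → Qm x ∈ DA)
    -- `Q₋` commutes with `B = A + V`:
    (hQB : ∀ x : DA, A ⟨Qm (x : H), hQdom _ x.2⟩ + V ⟨Qm (x : H), hQdom _ x.2⟩ =
      Qm (A x + V x))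
    -- `Q₋` is the spectral projection of `B = A + V` for `(−∞,0]`:
    (hBnonpos : ∀ x : DA, (x : H) ∈ LinearMap.range (Qm : H →ₗ[ℂ] H) →
      (⟪(x : H), A x + V x⟫_ℂ).re ≤ 0)
    (hBpos : ∀ x : DA, (x : H) ∈ LinearMap.range (((1 : H →L[ℂ] H) - Qm : H →L[ℂ] H) : H →ₗ[ℂ] H) → x ≠ 0 →
      0 < (⟪(x : H), A x + V x⟫_ℂ).re) :
    (∀ a b : ℝ, 0 ≤ a → 0 < b → b < 1 →
      (∀ x : DA, ‖V x‖ ≤ a * ‖(x : H)‖ + b * ‖A x‖) →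
      ∀ x : DA, (x : H) ∈ LinearMap.range (P : H →ₗ[ℂ] H) →
        ‖P (Qm (V x)) - P (V ⟨Qm (x : H), hQdom _ x.2⟩)‖ ≤
          a * (‖P ∘L Qm‖ + (1 + b) / (1 - b)) * ‖(x : H)‖ +
            b * (‖P ∘L Qm‖ + (1 + b) / (1 - b)) * ‖A x‖) ∧
    ∀ β : ℝ, 0 < β → ∃ α : ℝ, 0 ≤ α ∧
      ∀ x : DA, (x : H) ∈ LinearMap.range (P : H →ₗ[ℂ] H) →
        ‖P (Qm (V x)) - P (V ⟨Qm (x : H), hQdom _ x.2⟩)‖ ≤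
          α * ‖(x : H)‖ + β * ‖A x‖ := by
  have hPle : ∀ y : H, ‖P y‖ ≤ ‖y‖ := proj_norm_apply_le P hPproj hPsa
  have hQle : ∀ y : H, ‖Qm y‖ ≤ ‖y‖ := proj_norm_apply_le Qm hQproj hQsa
  have main : ∀ a b : ℝ, 0 ≤ a → 0 < b → b < 1 →
      (∀ x : DA, ‖V x‖ ≤ a * ‖(x : H)‖ + b * ‖A x‖) →
      ∀ x : DA, (x : H) ∈ LinearMap.range (P : H →ₗ[ℂ] H) →
        ‖P (Qm (V x)) - P (V ⟨Qm (x : H), hQdom _ x.2⟩)‖ ≤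
          a * (‖P ∘L Qm‖ + (1 + b) / (1 - b)) * ‖(x : H)‖ +
            b * (‖P ∘L Qm‖ + (1 + b) / (1 - b)) * ‖A x‖ := by
    intro a b ha hb hb1 hV x _
    set Qx : DA := ⟨Qm (x : H), hQdom _ x.2⟩ with hQxdef
    have h1b : (0:ℝ) < 1 - b := by linarith
    -- abbreviations
    set u := ‖(x : H)‖
    set v := ‖A x‖
    set w := ‖A Qx‖
    set c := ‖P ∘L Qm‖
    have hc : 0 ≤ c := norm_nonneg _
    have hVx : ‖V x‖ ≤ a * u + b * v := hV x
    have hVQx : ‖V Qx‖ ≤ a * u + b * w := by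
      have := hV Qx
      have hq : ‖(Qx : H)‖ ≤ u := hQle (x : H)
      calc ‖V Qx‖ ≤ a * ‖(Qx : H)‖ + b * ‖A Qx‖ := this
        _ ≤ a * u + b * w := by
            have := mul_le_mul_of_nonneg_left hq ha
            simp only [w]; linarith
    -- bound on ‖A Qx‖
    have hAQx : A Qx = Qm (A x + V x) - V Qx := by
      have := hQB x
      rw [← hQxdef] at this
      rw [eq_sub_iff_add_eq]
      exact this
    have hw : (1 - b) * w ≤ 2 * a * u + (1 + b) * v := by
      have h1 : w ≤ ‖Qm (A x + V x)‖ + ‖V Qx‖ := by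
        rw [show w = ‖A Qx‖ from rfl, hAQx]; exact norm_sub_le _ _
      have h2 : ‖Qm (A x + V x)‖ ≤ v + ‖V x‖ := by
        calc ‖Qm (A x + V x)‖ ≤ ‖A x + V x‖ := hQle _
          _ ≤ v + ‖V x‖ := norm_add_le _ _
      nlinarith [hVx, hVQx]
    -- bound on the two terms of K
    have hterm1 : ‖P (Qm (V x))‖ ≤ c * (a * u + b * v) := by
      have h1 : ‖P (Qm (V x))‖ ≤ c * ‖V x‖ := (P ∘L Qm).le_opNorm (V x)
      have := mul_le_mul_of_nonneg_left hVx hc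
      linarith
    have hterm2 : ‖P (V Qx)‖ ≤ a * u + b * w := (hPle _).trans hVQx
    have hK : ‖P (Qm (V x)) - P (V Qx)‖ ≤ c * (a * u + b * v) + (a * u + b * w) := by
      calc ‖P (Qm (V x)) - P (V Qx)‖ ≤ ‖P (Qm (V x))‖ + ‖P (V Qx)‖ := norm_sub_le _ _
        _ ≤ _ := add_le_add hterm1 hterm2
    -- final algebra
    set d := (1 + b) / (1 - b) with hd
    have hdb : (1 - b) * d = 1 + b := by
      rw [hd]; field_simp [h1b.ne']
    have hu : 0 ≤ u := norm_nonneg _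
    have hv : 0 ≤ v := norm_nonneg _
    have hw0 : 0 ≤ w := norm_nonneg _
    nlinarith [hK, hw, mul_le_mul_of_nonneg_left hw (le_of_lt hb), hdb,
      mul_nonneg ha hu, mul_nonneg hb.le hv]
  refine ⟨main, ?_⟩
  intro β hβ
  set c := ‖P ∘L Qm‖ with hcdef
  have hc : 0 ≤ c := norm_nonneg _
  set b : ℝ := min (1/2) (β / (c + 3)) with hbdef
  have hc3 : (0:ℝ) < c + 3 := by linarith
  have hb0 : 0 < b := lt_min (by norm_num) (div_pos hβ hc3)
  have hbhalf : b ≤ 1/2 := min_le_left _ _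
  have hb1 : b < 1 := by linarith
  have hbβ : b * (c + 3) ≤ β := by
    have : b ≤ β / (c + 3) := min_le_right _ _
    calc b * (c + 3) ≤ (β / (c + 3)) * (c + 3) := by nlinarith
      _ = β := by field_simp
  obtain ⟨a, ha, hV⟩ := hVinf b hb0
  have hdle : (1 + b) / (1 - b) ≤ 3 := by
    rw [div_le_iff₀ (by linarith)]
    linarith
  have hd0 : 0 ≤ (1 + b) / (1 - b) := div_nonneg (by linarith) (by linarith)
  refine ⟨a * (c + 3), mul_nonneg ha (by linarith), ?_⟩
  intro x hx
  have h := main a b ha hb0 hb1 hV x hx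
  have hCle : c + (1 + b) / (1 - b) ≤ c + 3 := by linarith
  have hC0 : 0 ≤ c + (1 + b) / (1 - b) := by linarith
  calc ‖P (Qm (V x)) - P (V ⟨Qm (x : H), hQdom _ x.2⟩)‖
      ≤ a * (c + (1 + b) / (1 - b)) * ‖(x : H)‖ +
          b * (c + (1 + b) / (1 - b)) * ‖A x‖ := h
    _ ≤ a * (c + 3) * ‖(x : H)‖ + β * ‖A x‖ := by
        have h1 : a * (c + (1 + b) / (1 - b)) ≤ a * (c + 3) :=
          mul_le_mul_of_nonneg_left hCle ha
        have h2 : b * (c + (1 + b) / (1 - b)) ≤ β := by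
          calc b * (c + (1 + b) / (1 - b)) ≤ b * (c + 3) :=
                mul_le_mul_of_nonneg_left hCle hb0.le
            _ ≤ β := hbβ
        have := norm_nonneg ((x : H))
        have := norm_nonneg (A x)
        nlinarith
end
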